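/- arXiv:2505.05657 — 2 statements merged into one kernel-verified Lean document; each statement's English description precedes it below -/
import Mathlib

section
/- Fix natural numbers L (number of observed STFT frames), Fq (number of frequency bins), K ≥ 1 (number of sources), F and P (future and past filter taps), and let J = Finset.Icc (-(F : ℤ)) (P : ℤ) be the tap index set. Let X : Fin L → Fin Fq → ℂ be the observed mixture, let Ŝ₁, …, Ŝ_K : ℤ → Fin Fq → ℂ be source estimates, let σ_N > 0 and c₀ > 0. Define the Gaussian log-likelihood of a filter tuple (G₁, …, G_K) (each G_k : J → Fin Fq → ℂ) as ℓ(G₁,…,G_K) = Real.log (c₀ * Real.exp (-(1/(2 σ_N²)) * Σ_{l ∈ Fin L} Σ_{f ∈ Fin Fq} ‖X l f − Σ_{k=1}^{K} (G_k *_l Ŝ_k)(l, f)‖²)). Assume the filtered source subspaces are pairwise orthogonal: for all k ≠ k′ and all filters G, G′ : J → Fin Fq → ℂ, Σ_{l ∈ Fin L} Σ_{f ∈ Fin Fq} (G *_l Ŝ_k)(l,f) * conj((G′ *_l Ŝ_{k′})(l,f)) = 0. Then a tuple (Ĝ₁, …, Ĝ_K) maximizes ℓ over all filter tuples if and only if for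 every k ∈ {1,…,K}, Ĝ_k minimizes the FCP objective G ↦ Σ_{l ∈ Fin L} Σ_{f ∈ Fin Fq} ‖X l f − (G *_l Ŝ_k)(l, f)‖² over all filters G : J → Fin Fq → ℂ. (Theorem 1: FCP with the constant weight λ = 1/(2σ_N²) is the maximum-likelihood relative-RIR estimator.) -/
open Finset


private lemma sum_swap3 {α β γ M : Type*} [Fintype α] [Fintype β] [Fintype γ]
    [AddCommMonoid M] (g : α → β → γ → M) :
    ∑ a : α, ∑ b : β, ∑ c : γ, g a b c = ∑ c : γ, ∑ a : α, ∑ b : β, g a b c := by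
  have h1 : ∀ a : α, ∑ b : β, ∑ c : γ, g a b c = ∑ c : γ, ∑ b : β, g a b c :=
    fun a => Finset.sum_comm
  simp_rw [h1]
  exact Finset.sum_comm

lemma expand_aux (L Fq K : ℕ) (X : Fin L → Fin Fq → ℂ)
    (y : Fin K → Fin L → Fin Fq → ℂ)
    (horth : ∀ k k' : Fin K, k ≠ k' →
      ∑ l : Fin L, ∑ f : Fin Fq, y k l f * (starRingEnd ℂ) (y k' l f) = 0) :
    ∑ l : Fin L, ∑ f : Fin Fq, ‖X l f - ∑ k : Fin K, y k l f‖ ^ 2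
      = (∑ k : Fin K, ∑ l : Fin L, ∑ f : Fin Fq, ‖X l f - y k l f‖ ^ 2)
        - ((K : ℝ) - 1) * ∑ l : Fin L, ∑ f : Fin Fq, ‖X l f‖ ^ 2 := by
  classical
  set T : (Fin L → Fin Fq → ℂ) → (Fin L → Fin Fq → ℂ) → ℂ :=
    fun a b => ∑ l : Fin L, ∑ f : Fin Fq, a l f * (starRingEnd ℂ) (b l f) with hT
  have hnorm : ∀ z : ℂ, ‖z‖ ^ 2 = (z * (starRingEnd ℂ) z).re := by
    intro z
    rw [Complex.mul_conj]
    simp [Complex.sq_norm]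
  have hsum : ∀ a : Fin L → Fin Fq → ℂ,
      ∑ l : Fin L, ∑ f : Fin Fq, ‖a l f‖ ^ 2 = (T a a).re := by
    intro a
    rw [hT]
    rw [Complex.re_sum]
    refine Finset.sum_congr rfl fun l _ => ?_
    rw [Complex.re_sum]
    exact Finset.sum_congr rfl fun f _ => hnorm _
  -- bilinearity
  have Texp : ∀ a b c d : Fin L → Fin Fq → ℂ,
      T (a - b) (c - d) = T a c - T a d - T b c + T b d := by
    intro a b c d
    simp only [hT, Pi.sub_apply, map_sub, ← Finset.sum_sub_distrib, ← Finset.sum_add_distrib]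
    refine Finset.sum_congr rfl fun l _ => Finset.sum_congr rfl fun f _ => ?_
    ring
  set Ys : Fin L → Fin Fq → ℂ := fun l f => ∑ k : Fin K, y k l f with hYs
  have hTXY : T X Ys = ∑ k : Fin K, T X (y k) := by
    simp only [hT, hYs, map_sum, Finset.mul_sum]
    exact sum_swap3 _
  have hTYX : T Ys X = ∑ k : Fin K, T (y k) X := by
    simp only [hT, hYs, Finset.sum_mul]
    exact sum_swap3 _
  have hTYY : T Ys Ys = ∑ k : Fin K, T (y k) (y k) := by
    have : T Ys Ys = ∑ k : Fin K, ∑ k' : Fin K, T (y k) (y k') := by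
      simp only [hT, hYs, map_sum, Finset.sum_mul_sum]
      rw [sum_swap3]
      refine Finset.sum_congr rfl fun k _ => ?_
      exact sum_swap3 _
    rw [this]
    refine Finset.sum_congr rfl fun k _ => ?_
    rw [Finset.sum_eq_single k]
    · intro k' _ hk'
      exact horth k k' (Ne.symm hk')
    · intro h; exact absurd (Finset.mem_univ k) h
  -- complex key identity
  have key : T (X - Ys) (X - Ys)
      = (∑ k : Fin K, T (X - y k) (X - y k)) - ((K : ℂ) - 1) * T X X := by
    rw [Texp, hTXY, hTYX, hTYY]
    have hk : ∀ k : Fin K, T (X - y k) (X - y k)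
        = T X X - T X (y k) - T (y k) X + T (y k) (y k) := fun k => Texp _ _ _ _
    simp_rw [hk]
    rw [Finset.sum_add_distrib, Finset.sum_sub_distrib, Finset.sum_sub_distrib,
      Finset.sum_const, Finset.card_univ, Fintype.card_fin, nsmul_eq_mul]
    ring
  have hX2 : ∀ l f, X l f - Ys l f = (X - Ys) l f := fun l f => rfl
  calc ∑ l : Fin L, ∑ f : Fin Fq, ‖X l f - ∑ k : Fin K, y k l f‖ ^ 2
      = (T (X - Ys) (X - Ys)).re := hsum (X - Ys)
    _ = ((∑ k : Fin K, T (X - y k) (X - y k)) - ((K : ℂ) - 1) * T X X).re := by rw [key]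
    _ = (∑ k : Fin K, (T (X - y k) (X - y k)).re) - ((K : ℝ) - 1) * (T X X).re := by
        rw [Complex.sub_re, Complex.re_sum]
        congr 1
        have : ((K : ℂ) - 1) = (((K : ℝ) - 1 : ℝ) : ℂ) := by push_cast; ring
        rw [this, Complex.re_ofReal_mul]
    _ = _ := by
        rw [hsum X]
        congr 1
        exact Finset.sum_congr rfl fun k _ => (hsum (X - y k)).symm

/-- Frame-domain convolution of a filter `G` (supported on the tap set
`J = Finset.Icc (-(F : ℤ)) (P : ℤ)`) with a source `S`:
`(G *_l S)(l, f) = ∑_{j ∈ J} G j f * S (l - j) f`. -/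
noncomputable def frameConv (L Fq F P : ℕ)
    (G : ↥(Finset.Icc (-(F : ℤ)) (P : ℤ)) → Fin Fq → ℂ)
    (S : ℤ → Fin Fq → ℂ) (l : Fin L) (f : Fin Fq) : ℂ :=
  ∑ j : ↥(Finset.Icc (-(F : ℤ)) (P : ℤ)), G j f * S ((l : ℤ) - (j : ℤ)) f

/-- The FCP objective for a single source estimate `S` with constant weight:
`G ↦ ∑_{l,f} ‖X l f − (G *_l S)(l, f)‖²`. -/
noncomputable def fcpObjective (L Fq F P : ℕ) (X : Fin L → Fin Fq → ℂ)
    (S : ℤ → Fin Fq → ℂ)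
    (G : ↥(Finset.Icc (-(F : ℤ)) (P : ℤ)) → Fin Fq → ℂ) : ℝ :=
  ∑ l : Fin L, ∑ f : Fin Fq, ‖X l f - frameConv L Fq F P G S l f‖ ^ 2

/-- The Gaussian log-likelihood of a filter tuple `(G 1, …, G K)`:
`ℓ(G) = log (c₀ * exp (-(1/(2 σ_N²)) * ∑_{l,f} ‖X l f − ∑_k (G_k *_l Ŝ_k)(l,f)‖²))`. -/
noncomputable def logLik (L Fq K F P : ℕ) (X : Fin L → Fin Fq → ℂ)
    (S : Fin K → ℤ → Fin Fq → ℂ) (σN c₀ : ℝ)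
    (G : Fin K → ↥(Finset.Icc (-(F : ℤ)) (P : ℤ)) → Fin Fq → ℂ) : ℝ :=
  Real.log (c₀ * Real.exp (-(1 / (2 * σN ^ 2)) *
    ∑ l : Fin L, ∑ f : Fin Fq,
      ‖X l f - ∑ k : Fin K, frameConv L Fq F P (G k) (S k) l f‖ ^ 2))

/-- **Theorem 1 (FCP is the maximum-likelihood relative-RIR estimator).**
Under pairwise orthogonality of the filtered source subspaces, a filter tuple
`(Ĝ 1, …, Ĝ K)` maximizes the Gaussian log-likelihood if and only if each `Ĝ k`
minimizes the FCP objective for source `k`. -/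
theorem fcp_is_maximum_likelihood
    (L Fq K F P : ℕ) (hK : 1 ≤ K)
    (X : Fin L → Fin Fq → ℂ) (Shat : Fin K → ℤ → Fin Fq → ℂ)
    (σN c₀ : ℝ) (hσ : 0 < σN) (hc : 0 < c₀)
    (horth : ∀ k k' : Fin K, k ≠ k' →
      ∀ G G' : ↥(Finset.Icc (-(F : ℤ)) (P : ℤ)) → Fin Fq → ℂ,
        ∑ l : Fin L, ∑ f : Fin Fq,
          frameConv L Fq F P G (Shat k) l f *
            (starRingEnd ℂ) (frameConv L Fq F P G' (Shat k') l f) = 0)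
    (Ghat : Fin K → ↥(Finset.Icc (-(F : ℤ)) (P : ℤ)) → Fin Fq → ℂ) :
    (∀ G : Fin K → ↥(Finset.Icc (-(F : ℤ)) (P : ℤ)) → Fin Fq → ℂ,
        logLik L Fq K F P X Shat σN c₀ G ≤ logLik L Fq K F P X Shat σN c₀ Ghat)
      ↔ (∀ k : Fin K, ∀ G : ↥(Finset.Icc (-(F : ℤ)) (P : ℤ)) → Fin Fq → ℂ,
          fcpObjective L Fq F P X (Shat k) (Ghat k)
            ≤ fcpObjective L Fq F P X (Shat k) G) := by
  
  classical
  set E : (Fin K → ↥(Finset.Icc (-(F : ℤ)) (P : ℤ)) → Fin Fq → ℂ) → ℝ :=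
    fun G => ∑ l : Fin L, ∑ f : Fin Fq,
      ‖X l f - ∑ k : Fin K, frameConv L Fq F P (G k) (Shat k) l f‖ ^ 2 with hE
  have hlog : ∀ G, logLik L Fq K F P X Shat σN c₀ G
      = Real.log c₀ - (1 / (2 * σN ^ 2)) * E G := by
    intro G
    rw [logLik, Real.log_mul hc.ne' (Real.exp_ne_zero _), Real.log_exp, hE]
    ring
  have hα : 0 < 1 / (2 * σN ^ 2) := by positivity
  have hmono : ∀ G G', logLik L Fq K F P X Shat σN c₀ G ≤ logLik L Fq K F P X Shat σN c₀ G'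
      ↔ E G' ≤ E G := by
    intro G G'
    rw [hlog, hlog]
    constructor
    · intro h; nlinarith
    · intro h; nlinarith
  have hkey : ∀ G, E G = (∑ k : Fin K, fcpObjective L Fq F P X (Shat k) (G k))
      - ((K : ℝ) - 1) * ∑ l : Fin L, ∑ f : Fin Fq, ‖X l f‖ ^ 2 := by
    intro G
    exact expand_aux L Fq K X (fun k => frameConv L Fq F P (G k) (Shat k))
      (fun k k' hkk' => horth k k' hkk' (G k) (G k'))
  constructor
  · intro h k G
    have h1 := (hmono (Function.update Ghat k G) Ghat).mp (h _)
    rw [hkey, hkey] at h1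
    have h2 : ∑ j : Fin K, fcpObjective L Fq F P X (Shat j) (Ghat j)
        ≤ ∑ j : Fin K, fcpObjective L Fq F P X (Shat j) (Function.update Ghat k G j) := by
      linarith
    have e1 : ∑ j : Fin K, fcpObjective L Fq F P X (Shat j) (Ghat j)
        = fcpObjective L Fq F P X (Shat k) (Ghat k)
          + ∑ j ∈ Finset.univ \ {k}, fcpObjective L Fq F P X (Shat j) (Ghat j) :=
      Finset.sum_eq_add_sum_sdiff_singleton_of_mem (Finset.mem_univ k) _
    have e2 : ∑ j : Fin K, fcpObjective L Fq F P X (Shat j) (Function.update Ghat k G j)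
        = fcpObjective L Fq F P X (Shat k) G
          + ∑ j ∈ Finset.univ \ {k}, fcpObjective L Fq F P X (Shat j) (Ghat j) := by
      rw [Finset.sum_eq_add_sum_sdiff_singleton_of_mem (Finset.mem_univ k)
        (fun j => fcpObjective L Fq F P X (Shat j) (Function.update Ghat k G j)),
        Function.update_self]
      congr 1
      refine Finset.sum_congr rfl fun j hj => ?_
      rw [Function.update_of_ne]
      simp only [Finset.mem_sdiff, Finset.mem_singleton] at hj
      exact hj.2
    rw [e1, e2] at h2
    linarith
  · intro h G
    rw [hmono, hkey, hkey]
    have : ∑ k : Fin K, fcpObjective L Fq F P X (Shat k) (Ghat k)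
        ≤ ∑ k : Fin K, fcpObjective L Fq F P X (Shat k) (G k) :=
      Finset.sum_le_sum fun k _ => h k (G k)
    linarith
end

section
/- Let n ≥ 1 and let p : EuclideanSpace ℝ (Fin n) → ℝ be a measurable function with p ≥ 0, ∫ p(s) ds = 1, and ∫ ‖s‖ * p(s) ds < ∞. Fix σ > 0 and let φ_σ(y) = (2 π σ²)^(−n/2) * Real.exp (−‖y‖² / (2 σ²)) denote the isotropic Gaussian kernel. Define the smoothed density p_σ(x) = ∫ p(s) * φ_σ(x − s) ds and the posterior mean m(x) = (∫ p(s) * φ_σ(x − s) • s ds) / p_σ(x). Then for every x: p_σ(x) > 0; the function x ↦ Real.log (p_σ x) is differentiable at x; and its gradient satisfies ∇ (fun x => Real.log (p_σ x)) x = (σ²)⁻¹ • (m x − x) (Tweedie's formula: the score of the Gaussian-smoothed density equals (E[s | x] − x)/σ²). -/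
open MeasureTheory

lemma gauss_hasFDerivAt {E : Type*} [NormedAddCommGroup E] [InnerProductSpace ℝ E]
    (c σ : ℝ) (hσ : σ ≠ 0) (u : E) :
    HasFDerivAt (fun y : E => c * Real.exp (-‖y‖ ^ 2 / (2 * σ ^ 2)))
      ((-(c * Real.exp (-‖u‖ ^ 2 / (2 * σ ^ 2))) / σ ^ 2) • innerSL ℝ u) u := by
  have h0 : HasFDerivAt (fun y : E => ‖y‖ ^ 2) (2 • innerSL ℝ u) u :=
    (hasStrictFDerivAt_norm_sq u).hasFDerivAt
  have h1 : HasFDerivAt (fun y : E => -‖y‖ ^ 2 / (2 * σ ^ 2))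
      ((-(2 * σ ^ 2)⁻¹) • (2 • innerSL ℝ u)) u := by
    have := h0.const_mul (-(2 * σ ^ 2)⁻¹)
    refine this.congr_of_eventuallyEq (Filter.Eventually.of_forall fun y => ?_)
    ring
  have h2 := (h1.exp).const_mul c
  refine h2.congr_fderiv ?_
  ext v
  simp only [ContinuousLinearMap.coe_smul', Pi.smul_apply, ContinuousLinearMap.smul_apply,
    smul_eq_mul]
  have : (σ:ℝ) ^ 2 ≠ 0 := pow_ne_zero _ hσ
  field_simp
  ring

lemma gauss_tail_bound (σ t : ℝ) (hσ : 0 < σ) (ht : 0 ≤ t) :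
    Real.exp (-t ^ 2 / (2 * σ ^ 2)) * t ≤ 2 * σ := by
  have h2σ : (0:ℝ) < 2 * σ ^ 2 := by positivity
  rcases le_or_gt t (2 * σ) with h | h
  · calc Real.exp (-t ^ 2 / (2 * σ ^ 2)) * t ≤ 1 * t := by
          apply mul_le_mul_of_nonneg_right _ ht
          have : -t ^ 2 / (2 * σ ^ 2) ≤ 0 := by
            rw [neg_div, neg_nonpos]; positivity
          exact Real.exp_le_one_iff.2 this
      _ ≤ 2 * σ := by simpa using h
  · have ht0 : 0 < t := lt_trans (by positivity) h
    have hexp : Real.exp (-t ^ 2 / (2 * σ ^ 2)) ≤ (2 * σ ^ 2) / t ^ 2 := by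
      have ha : (0:ℝ) < t ^ 2 / (2 * σ ^ 2) := by positivity
      have hle : t ^ 2 / (2 * σ ^ 2) ≤ Real.exp (t ^ 2 / (2 * σ ^ 2)) := by
        linarith [Real.add_one_le_exp (t ^ 2 / (2 * σ ^ 2))]
      have : (Real.exp (t ^ 2 / (2 * σ ^ 2)))⁻¹ ≤ (t ^ 2 / (2 * σ ^ 2))⁻¹ :=
        inv_anti₀ ha hle
      calc Real.exp (-t ^ 2 / (2 * σ ^ 2)) = (Real.exp (t ^ 2 / (2 * σ ^ 2)))⁻¹ := by
            rw [neg_div, Real.exp_neg]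
        _ ≤ (t ^ 2 / (2 * σ ^ 2))⁻¹ := this
        _ = (2 * σ ^ 2) / t ^ 2 := by rw [inv_div]
    calc Real.exp (-t ^ 2 / (2 * σ ^ 2)) * t ≤ ((2 * σ ^ 2) / t ^ 2) * t :=
          mul_le_mul_of_nonneg_right hexp ht
      _ = (2 * σ ^ 2) / t := by field_simp
      _ ≤ (2 * σ ^ 2) / (2 * σ) := by
          apply div_le_div_of_nonneg_left (by positivity) (by positivity) h.le
      _ = σ := by field_simp
      _ ≤ 2 * σ := by linarith

open scoped RealInnerProductSpace

set_option synthInstance.maxHeartbeats 1000000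
set_option maxHeartbeats 1000000

/-- **Tweedie's formula.** Let `p` be a probability density on `ℝⁿ` with finite
first moment, let `φ_σ` be the isotropic Gaussian kernel with variance `σ²`,
let `p_σ = p * φ_σ` (Gaussian smoothing) and let `m x` be the posterior mean
`E[s | x]`. Then for every `x`, `p_σ x > 0`, `x ↦ log (p_σ x)` is differentiable
at `x`, and its gradient equals `(σ²)⁻¹ • (m x − x)`. -/
theorem tweedie_formula
    (n : ℕ) (hn : 1 ≤ n)
    (p : EuclideanSpace ℝ (Fin n) → ℝ)
    (hp_meas : Measurable p)
    (hp_nonneg : ∀ s, 0 ≤ p s)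
    (hp_int : ∫ s, p s = 1)
    (hp_moment : Integrable (fun s : EuclideanSpace ℝ (Fin n) => ‖s‖ * p s))
    (σ : ℝ) (hσ : 0 < σ)
    (φ : EuclideanSpace ℝ (Fin n) → ℝ)
    (hφ : ∀ y, φ y =
      (2 * Real.pi * σ ^ 2) ^ (-(n : ℝ) / 2) * Real.exp (-‖y‖ ^ 2 / (2 * σ ^ 2)))
    (pσ : EuclideanSpace ℝ (Fin n) → ℝ)
    (hpσ : ∀ x, pσ x = ∫ s, p s * φ (x - s))
    (m : EuclideanSpace ℝ (Fin n) → EuclideanSpace ℝ (Fin n))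
    (hm : ∀ x, m x = (pσ x)⁻¹ • ∫ s, (p s * φ (x - s)) • s)
    (x : EuclideanSpace ℝ (Fin n)) :
    0 < pσ x ∧
    DifferentiableAt ℝ (fun y => Real.log (pσ y)) x ∧
    gradient (fun y => Real.log (pσ y)) x = (σ ^ 2)⁻¹ • (m x - x) := by
  classical
  have hσ2 : (0:ℝ) < σ ^ 2 := by positivity
  set c : ℝ := (2 * Real.pi * σ ^ 2) ^ (-(n : ℝ) / 2) with hcdef
  have hc : 0 < c := Real.rpow_pos_of_pos (by positivity) _
  set ψ : EuclideanSpace ℝ (Fin n) → ℝ :=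
    fun y => c * Real.exp (-‖y‖ ^ 2 / (2 * σ ^ 2)) with hψdef
  have hφψ : ∀ y, φ y = ψ y := fun y => hφ y
  have hψpos : ∀ y, 0 < ψ y := fun y => mul_pos hc (Real.exp_pos _)
  have hψle : ∀ y, ψ y ≤ c := by
    intro y
    have h1 : Real.exp (-‖y‖ ^ 2 / (2 * σ ^ 2)) ≤ 1 :=
      Real.exp_le_one_iff.2 (by rw [neg_div, neg_nonpos]; positivity)
    simpa using mul_le_mul_of_nonneg_left h1 hc.le
  have hψcont : Continuous ψ :=
    continuous_const.mul (Real.continuous_exp.comp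
      (((continuous_norm.pow 2).neg).div_const _))
  have hpL1 : Integrable p := by
    by_contra h
    rw [integral_undef h] at hp_int
    exact one_ne_zero hp_int.symm
  have hmeas_f : ∀ y, Measurable fun s : EuclideanSpace ℝ (Fin n) => p s * ψ (y - s) :=
    fun y => hp_meas.mul (hψcont.measurable.comp (measurable_const.sub measurable_id))
  have hint_f : ∀ y, Integrable (fun s : EuclideanSpace ℝ (Fin n) => p s * ψ (y - s)) := by
    intro y
    refine (hpL1.const_mul c).mono' (hmeas_f y).aestronglyMeasurable ?_
    filter_upwards with s
    rw [Real.norm_eq_abs, abs_of_nonneg (mul_nonneg (hp_nonneg s) (hψpos _).le)]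
    calc p s * ψ (y - s) ≤ p s * c :=
          mul_le_mul_of_nonneg_left (hψle _) (hp_nonneg s)
      _ = c * p s := mul_comm _ _
  have hpσfun : pσ = fun y => ∫ s, p s * ψ (y - s) := by
    funext y; rw [hpσ y]; congr 1; funext s; rw [hφψ]
  -- positivity
  have hsupp : 0 < volume (Function.support p) :=
    (integral_pos_iff_support_of_nonneg hp_nonneg hpL1).1 (by rw [hp_int]; norm_num)
  have hpσpos : ∀ y, 0 < pσ y := by
    intro y
    rw [hpσfun]
    refine (integral_pos_iff_support_of_nonneg
      (fun s => mul_nonneg (hp_nonneg s) (hψpos _).le) (hint_f y)).2 ?_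
    refine lt_of_lt_of_le hsupp (measure_mono ?_)
    intro s hs
    simp only [Function.mem_support] at *
    exact mul_ne_zero hs (hψpos _).ne'
  -- derivative of the kernel
  have hψderiv : ∀ u, HasFDerivAt ψ ((-(ψ u) / σ ^ 2) • innerSL ℝ u) u :=
    fun u => gauss_hasFDerivAt c σ hσ.ne' u
  set F' : EuclideanSpace ℝ (Fin n) → EuclideanSpace ℝ (Fin n) →
      (EuclideanSpace ℝ (Fin n) →L[ℝ] ℝ) :=
    fun y s => (p s * (-(ψ (y - s)) / σ ^ 2)) • innerSL ℝ (y - s) with hF'def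
  have hF'deriv : ∀ y s, HasFDerivAt (fun z => p s * ψ (z - s)) (F' y s) y := by
    intro y s
    have h1 : HasFDerivAt (fun z : EuclideanSpace ℝ (Fin n) => z - s)
        (ContinuousLinearMap.id ℝ _) y := (hasFDerivAt_id y).sub_const s
    have h2 := ((hψderiv (y - s)).comp y h1).const_mul (p s)
    refine h2.congr_fderiv ?_
    ext v
    simp [hF'def, smul_smul, mul_assoc]
  have hF'norm : ∀ y s, ‖F' y s‖ ≤ (c * (2 * σ) / σ ^ 2) * p s := by
    intro y s
    simp only [hF'def]
    rw [norm_smul (p s * (-ψ (y - s) / σ ^ 2)) (innerSL ℝ (y - s)),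
      innerSL_apply_norm, Real.norm_eq_abs, abs_mul,
      abs_of_nonneg (hp_nonneg s), abs_div, abs_neg,
      abs_of_nonneg (hψpos _).le, abs_of_nonneg hσ2.le]
    have hb : ψ (y - s) * ‖y - s‖ ≤ c * (2 * σ) := by
      have h := gauss_tail_bound σ ‖y - s‖ hσ (norm_nonneg _)
      calc ψ (y - s) * ‖y - s‖
          = c * (Real.exp (-‖y - s‖ ^ 2 / (2 * σ ^ 2)) * ‖y - s‖) := by
            rw [hψdef]; ring
        _ ≤ c * (2 * σ) := mul_le_mul_of_nonneg_left h hc.le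
    calc p s * (ψ (y - s) / σ ^ 2) * ‖y - s‖
        = (ψ (y - s) * ‖y - s‖ / σ ^ 2) * p s := by ring
      _ ≤ (c * (2 * σ) / σ ^ 2) * p s := by
          apply mul_le_mul_of_nonneg_right _ (hp_nonneg s)
          exact div_le_div_of_nonneg_right hb hσ2.le
  have hF'meas : AEStronglyMeasurable (F' x) volume := by
    rw [hF'def]; apply AEStronglyMeasurable.fun_smul
    · exact (hp_meas.mul (((hψcont.measurable.comp
        (measurable_const.sub measurable_id)).neg).div_const _)).aestronglyMeasurable
    · exact ((innerSL ℝ).continuous.comp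
        (continuous_const.sub continuous_id)).aestronglyMeasurable
  have hF'int : Integrable (F' x) := by
    refine (hpL1.const_mul (c * (2 * σ) / σ ^ 2)).mono' hF'meas ?_
    filter_upwards with s using hF'norm x s
  have key : HasFDerivAt (fun y => ∫ s, p s * ψ (y - s)) (∫ s, F' x s) x := by
    apply hasFDerivAt_integral_of_dominated_of_fderiv_le (Metric.ball_mem_nhds x one_pos)
    · filter_upwards with y using (hmeas_f y).aestronglyMeasurable
    · exact hint_f x
    · exact hF'meas
    · filter_upwards with s
      intro y hy
      exact hF'norm y s
    · exact hpL1.const_mul _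
    · filter_upwards with s
      intro y hy
      exact hF'deriv y s
  -- vector integrals
  set I1 := ∫ s, (p s * ψ (x - s)) • s with hI1def
  set P := ∫ s, p s * ψ (x - s) with hPdef
  have hP : pσ x = P := by rw [hpσfun]
  have hPpos : 0 < pσ x := hpσpos x
  have hvmeas : AEStronglyMeasurable
      (fun s : EuclideanSpace ℝ (Fin n) => (p s * ψ (x - s)) • s) volume :=
    (hmeas_f x).aestronglyMeasurable.smul aestronglyMeasurable_id
  have hvint : Integrable (fun s : EuclideanSpace ℝ (Fin n) => (p s * ψ (x - s)) • s) := by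
    refine (hp_moment.const_mul c).mono' hvmeas ?_
    filter_upwards with s
    rw [norm_smul, Real.norm_eq_abs, abs_of_nonneg (mul_nonneg (hp_nonneg s) (hψpos _).le)]
    calc p s * ψ (x - s) * ‖s‖ ≤ p s * c * ‖s‖ := by
          apply mul_le_mul_of_nonneg_right _ (norm_nonneg s)
          exact mul_le_mul_of_nonneg_left (hψle _) (hp_nonneg s)
      _ = c * (‖s‖ * p s) := by ring
  have ha_eq : (fun s : EuclideanSpace ℝ (Fin n) => p s * (-(ψ (x - s)) / σ ^ 2))
      = fun s => (-(σ ^ 2)⁻¹) * (p s * ψ (x - s)) := by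
    funext s; field_simp
  have ha_int : Integrable (fun s : EuclideanSpace ℝ (Fin n) =>
      p s * (-(ψ (x - s)) / σ ^ 2)) := by
    rw [ha_eq]; exact (hint_f x).const_mul _
  have hg_eq2 : (fun s : EuclideanSpace ℝ (Fin n) =>
      (p s * (-(ψ (x - s)) / σ ^ 2)) • s)
      = fun s => (-(σ ^ 2)⁻¹) • ((p s * ψ (x - s)) • s) := by
    funext s; rw [smul_smul]; congr 1; field_simp
  have hgs_int : Integrable (fun s : EuclideanSpace ℝ (Fin n) =>
      (p s * (-(ψ (x - s)) / σ ^ 2)) • s) := by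
    rw [hg_eq2]; exact hvint.smul (-(σ ^ 2)⁻¹)
  have hgx_int : Integrable (fun s : EuclideanSpace ℝ (Fin n) =>
      (p s * (-(ψ (x - s)) / σ ^ 2)) • x) := ha_int.smul_const x
  have hg_int : Integrable (fun s : EuclideanSpace ℝ (Fin n) =>
      (p s * (-(ψ (x - s)) / σ ^ 2)) • (x - s)) := by
    have : (fun s : EuclideanSpace ℝ (Fin n) =>
        (p s * (-(ψ (x - s)) / σ ^ 2)) • (x - s))
        = fun s => (p s * (-(ψ (x - s)) / σ ^ 2)) • x
          - (p s * (-(ψ (x - s)) / σ ^ 2)) • s := by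
      funext s; rw [smul_sub]
    rw [this]; exact hgx_int.sub hgs_int
  set G : EuclideanSpace ℝ (Fin n) := (σ ^ 2)⁻¹ • (I1 - P • x) with hGdef
  have hg_val : (∫ s, (p s * (-(ψ (x - s)) / σ ^ 2)) • (x - s)) = G := by
    have hsplit : (∫ s, (p s * (-(ψ (x - s)) / σ ^ 2)) • (x - s))
        = (∫ s, (p s * (-(ψ (x - s)) / σ ^ 2)) • x)
          - ∫ s, (p s * (-(ψ (x - s)) / σ ^ 2)) • s := by
      rw [← integral_sub hgx_int hgs_int]
      congr 1; funext s; rw [smul_sub]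
    rw [hsplit]
    have h1 : (∫ s, (p s * (-(ψ (x - s)) / σ ^ 2)) • x)
        = ((-(σ ^ 2)⁻¹) * P) • x := by
      rw [integral_smul_const]
      congr 1
      rw [ha_eq, integral_const_mul]
    have h2 : (∫ s, (p s * (-(ψ (x - s)) / σ ^ 2)) • s)
        = (-(σ ^ 2)⁻¹) • I1 := by
      rw [hg_eq2, integral_smul]
    rw [h1, h2, hGdef]
    module
  have hintegral_eq : (∫ s, F' x s) = (InnerProductSpace.toDual ℝ _) G := by
    apply ContinuousLinearMap.ext
    intro v
    rw [ContinuousLinearMap.integral_apply hF'int]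
    have h1 : ∀ s, (F' x s) v = ⟪v, (p s * (-(ψ (x - s)) / σ ^ 2)) • (x - s)⟫ := by
      intro s
      simp only [hF'def]
      simp only [ContinuousLinearMap.smul_apply, innerSL_apply_apply, smul_eq_mul]
      rw [real_inner_smul_right, real_inner_comm]
    calc (∫ s, (F' x s) v) = ∫ s, ⟪v, (p s * (-(ψ (x - s)) / σ ^ 2)) • (x - s)⟫ := by
          congr 1; funext s; rw [h1]
      _ = ⟪v, ∫ s, (p s * (-(ψ (x - s)) / σ ^ 2)) • (x - s)⟫ := integral_inner hg_int v
      _ = ⟪G, v⟫ := by rw [hg_val, real_inner_comm]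
      _ = (InnerProductSpace.toDual ℝ _) G v := by
          rw [InnerProductSpace.toDual_apply_apply]
  have hgrad : HasGradientAt pσ G x := by
    rw [hasGradientAt_iff_hasFDerivAt, hpσfun, ← hintegral_eq]
    exact key
  have hlog : HasGradientAt (fun y => Real.log (pσ y)) ((pσ x)⁻¹ • G) x := by
    have h1 : HasFDerivAt pσ ((InnerProductSpace.toDual ℝ _) G) x := hgrad.hasFDerivAt
    have h2 : HasDerivAt Real.log (pσ x)⁻¹ (pσ x) := Real.hasDerivAt_log hPpos.ne'
    have h3 := h2.comp_hasFDerivAt x h1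
    rw [hasGradientAt_iff_hasFDerivAt, _root_.map_smul]
    exact h3
  refine ⟨hPpos, hlog.differentiableAt, ?_⟩
  have hI1' : (∫ s, (p s * φ (x - s)) • s) = I1 := by
    rw [hI1def]; congr 1; funext s; rw [hφψ]
  rw [hlog.gradient, hm x, hI1', hGdef, hP]
  have hPne : P ≠ 0 := by rw [← hP]; exact hPpos.ne'
  rw [smul_comm, smul_sub, inv_smul_smul₀ hPne]
end
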